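/- Suppose min_k lim_{s→+∞} f(k,s)/s > α₁ := η(q)·q_max − η'(p)·p_min, and there exists S > 0 with f(k,−s) ≤ −f(k,s) for s > S. Then the functional J(y) = ∑_{k=1}^{N+2}(p(k)/2)(Δ²y(k-2))² − ∑_{k=1}^{N+1}(q(k)/2)(Δy(k-1))² + ∑_{k=1}^{N}F(k,y(k)) is coercive on E, and the BVP Δ²(p(k)Δ²y(k-2)) + Δ(q(k)Δy(k-1)) + f(k,y(k)) = 0 with zero boundary values has at least one solution. -/

import Mathlib

open Finset Matrix

/-- Forward difference `Δy(k) = y(k+1) - y(k)`. -/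
def fd (y : ℤ → ℝ) (k : ℤ) : ℝ := y (k + 1) - y k

/-- Second forward difference `Δ²y(k) = y(k+2) - 2y(k+1) + y(k)`. -/
def fd2 (y : ℤ → ℝ) (k : ℤ) : ℝ := y (k + 2) - 2 * y (k + 1) + y k

/-- Dirichlet boundary conditions `y(-1) = y(0) = y(N+1) = y(N+2) = 0`. -/
def bc (N : ℕ) (y : ℤ → ℝ) : Prop :=
  y (-1) = 0 ∧ y 0 = 0 ∧ y ((N : ℤ) + 1) = 0 ∧ y ((N : ℤ) + 2) = 0

/-- `y` satisfies `Δ²(p(k)Δ²y(k-2)) + Δ(q(k)Δy(k-1)) + f(k,y(k)) = 0` for `k ∈ Z[1,N]`. -/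
def solves (N : ℕ) (p q : ℤ → ℝ) (f : ℤ → ℝ → ℝ) (y : ℤ → ℝ) : Prop :=
  ∀ k ∈ Finset.Icc (1 : ℤ) (N : ℤ),
    fd2 (fun j => p j * fd2 y (j - 2)) k
      + fd (fun j => q j * fd y (j - 1)) k + f k (y k) = 0

/-- `F(k,s) = ∫₀ˢ f(k,t) dt`. -/
noncomputable def Fint (f : ℤ → ℝ → ℝ) (k : ℤ) (s : ℝ) : ℝ := ∫ t in (0 : ℝ)..s, f k t

/-- The energy functional
`J(y) = ∑_{k=1}^{N+2} (p(k)/2)(Δ²y(k-2))² − ∑_{k=1}^{N+1} (q(k)/2)(Δy(k-1))² + ∑_{k=1}^{N} F(k,y(k))`. -/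
noncomputable def J (N : ℕ) (p q : ℤ → ℝ) (f : ℤ → ℝ → ℝ) (y : ℤ → ℝ) : ℝ :=
  ∑ k ∈ Finset.Icc (1 : ℤ) ((N : ℤ) + 2), p k / 2 * (fd2 y (k - 2)) ^ 2
    - ∑ k ∈ Finset.Icc (1 : ℤ) ((N : ℤ) + 1), q k / 2 * (fd y (k - 1)) ^ 2
    + ∑ k ∈ Finset.Icc (1 : ℤ) (N : ℤ), Fint f k (y k)

open Matrix

/-- The (N+1)×N first-difference matrix under zero boundary conditions. -/
def Vmat (N : ℕ) : Matrix (Fin (N + 1)) (Fin N) ℝ := fun i j =>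
  if (i : ℕ) = (j : ℕ) then 1 else if (i : ℕ) = (j : ℕ) + 1 then -1 else 0

/-- The (N+2)×N second-difference matrix under zero boundary conditions. -/
def Wmat (N : ℕ) : Matrix (Fin (N + 2)) (Fin N) ℝ := fun i j =>
  if (i : ℕ) = (j : ℕ) then 1
  else if (i : ℕ) = (j : ℕ) + 1 then -2
  else if (i : ℕ) = (j : ℕ) + 2 then 1 else 0

/-- `lam` is the smallest eigenvalue of the matrix `M`. -/
def IsSmallestEigenvalue {n : ℕ} (M : Matrix (Fin n) (Fin n) ℝ) (lam : ℝ) : Prop :=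
  IsLeast {μ : ℝ | ∃ x : Fin n → ℝ, x ≠ 0 ∧ M.mulVec x = μ • x} lam


set_option linter.unreachableTactic false
set_option linter.unusedTactic false
set_option linter.unnecessarySeqFocus false
set_option linter.unnecessarySimpa false
set_option maxHeartbeats 1000000

open Filter intervalIntegral


lemma rayleigh {n : ℕ} (M : Matrix (Fin n) (Fin n) ℝ) (hM : M.IsHermitian) (lam : ℝ)
    (h : IsSmallestEigenvalue M lam) (x : Fin n → ℝ) :
    lam * (∑ i, x i ^ 2) ≤ x ⬝ᵥ M *ᵥ x := by
  have hle : ∀ i, lam ≤ hM.eigenvalues i := by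
    intro i
    exact h.2 ⟨(hM.eigenvectorBasis i).ofLp, fun h0 => hM.eigenvectorBasis.orthonormal.ne_zero i
      (by simpa using congrArg (WithLp.toLp 2) h0),
      hM.mulVec_eigenvectorBasis i⟩
  have hMt : Mᵀ = M := by
    have := hM.eq
    rwa [Matrix.conjTranspose_eq_transpose_of_trivial] at this
  set X : EuclideanSpace ℝ (Fin n) := WithLp.toLp 2 x with hX
  set b := hM.eigenvectorBasis with hb
  have hinner : ∀ u v : EuclideanSpace ℝ (Fin n), (inner ℝ u v : ℝ) = u.ofLp ⬝ᵥ v.ofLp := by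
    intro u v
    simp [PiLp.inner_apply, dotProduct, mul_comm]
  have hbi : ∀ i, (inner ℝ (b i) (WithLp.toLp 2 (M *ᵥ x)) : ℝ)
      = hM.eigenvalues i * (inner ℝ (b i) X : ℝ) := by
    intro i
    rw [hinner, hinner, WithLp.ofLp_toLp, dotProduct_mulVec, ← Matrix.mulVec_transpose, hMt]
    have hmv := hM.mulVec_eigenvectorBasis i
    erw [hmv, smul_dotProduct]
    rfl
  have key : x ⬝ᵥ M *ᵥ x = ∑ i, hM.eigenvalues i * (inner ℝ (b i) X : ℝ) ^ 2 := by
    have hx' : x ⬝ᵥ M *ᵥ x = inner ℝ X (WithLp.toLp 2 (M *ᵥ x)) := by rw [hinner]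
    rw [hx']
    rw [← b.sum_inner_mul_inner X (WithLp.toLp 2 (M *ᵥ x))]
    refine Finset.sum_congr rfl fun i _ => ?_
    rw [hbi i, real_inner_comm X (b i)]
    ring
  have key2 : ∑ i, x i ^ 2 = ∑ i, (inner ℝ (b i) X : ℝ) ^ 2 := by
    have := b.sum_inner_mul_inner X X
    have h2 : (inner ℝ X X : ℝ) = ∑ i, x i ^ 2 := by
      rw [hinner, hX]; simp [dotProduct, pow_two]
    rw [h2] at this
    rw [← this]
    refine Finset.sum_congr rfl fun i _ => ?_
    rw [real_inner_comm X (b i)]; ring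
  rw [key, key2, Finset.mul_sum]
  exact Finset.sum_le_sum fun i _ => mul_le_mul_of_nonneg_right (hle i) (sq_nonneg _)


/-- embedding of a finite vector into ℤ → ℝ, supported on [1,N], emb x k = x (k-1). -/
def emb (N : ℕ) (x : Fin N → ℝ) : ℤ → ℝ := fun k =>
  if h : 1 ≤ k ∧ k ≤ (N : ℤ) then x ⟨(k - 1).toNat, by omega⟩ else 0

lemma emb_zero {N : ℕ} (x : Fin N → ℝ) (k : ℤ) (h : ¬(1 ≤ k ∧ k ≤ (N : ℤ))) :
    emb N x k = 0 := dif_neg h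

lemma emb_in {N : ℕ} (x : Fin N → ℝ) (k : ℤ) (h : 1 ≤ k ∧ k ≤ (N : ℤ)) :
    emb N x k = x ⟨(k - 1).toNat, by omega⟩ := dif_pos h

lemma emb_coe {N : ℕ} (x : Fin N → ℝ) (i : Fin N) :
    emb N x ((i : ℤ) + 1) = x i := by
  rw [emb_in x _ (by omega)]
  congr 1
  ext
  simp

lemma emb_add_smul {N : ℕ} (x d : Fin N → ℝ) (t : ℝ) (k : ℤ) :
    emb N (x + t • d) k = emb N x k + t * emb N d k := by
  unfold emb
  by_cases h : 1 ≤ k ∧ k ≤ (N : ℤ)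
  · simp [dif_pos h]
  · simp [dif_neg h]

/-- reindex sums over Icc 1 M to Fin M -/
lemma sum_Icc_fin (M : ℕ) (g : ℤ → ℝ) :
    ∑ k ∈ Finset.Icc (1 : ℤ) (M : ℤ), g k = ∑ i : Fin M, g ((i : ℤ) + 1) := by
  have : Finset.Icc (1 : ℤ) (M : ℤ)
      = Finset.map ⟨fun i : ℕ => (i : ℤ) + 1, by intro a b h; simpa using h⟩ (Finset.range M) := by
    ext k
    simp only [Finset.mem_Icc, Finset.mem_map, Finset.mem_range, Function.Embedding.coeFn_mk]
    constructor
    · rintro ⟨h1, h2⟩; exact ⟨(k - 1).toNat, by omega, by change (((k - 1).toNat : ℕ) : ℤ) + 1 = k; omega⟩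
    · rintro ⟨a, ha, rfl⟩; change 1 ≤ (a : ℤ) + 1 ∧ (a : ℤ) + 1 ≤ M; omega
  rw [this, Finset.sum_map]
  exact (Fin.sum_univ_eq_sum_range (fun i => g ((i : ℤ) + 1)) M).symm

lemma sum_shift (g : ℤ → ℝ) (a b j : ℤ) :
    ∑ k ∈ Finset.Icc a b, g (k + j) = ∑ k ∈ Finset.Icc (a + j) (b + j), g k := by
  rw [← Finset.map_add_right_Icc a b j, Finset.sum_map]
  rfl

lemma sum_zero_ext {N : ℕ} (z : ℤ → ℝ) (hz : ∀ k, ¬(1 ≤ k ∧ k ≤ (N : ℤ)) → z k = 0)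
    (c d : ℤ) (hc : c ≤ 1) (hd : (N : ℤ) ≤ d) :
    ∑ k ∈ Finset.Icc c d, (z k) ^ 2 = ∑ k ∈ Finset.Icc (1 : ℤ) (N : ℤ), (z k) ^ 2 := by
  refine (Finset.sum_subset (Finset.Icc_subset_Icc hc hd) fun k hk hnk => ?_).symm
  rw [hz k]
  · ring
  · simp only [Finset.mem_Icc] at hnk ⊢
    omega

lemma emb_parseval {N : ℕ} (x : Fin N → ℝ) :
    ∑ k ∈ Finset.Icc (1 : ℤ) (N : ℤ), (emb N x k) ^ 2 = ∑ i, x i ^ 2 := by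
  rw [sum_Icc_fin]
  exact Finset.sum_congr rfl fun i _ => by rw [emb_coe]

lemma ind_sum_c {N : ℕ} (x : Fin N → ℝ) (a c : ℕ) :
    ∑ j : Fin N, (if a = (j : ℕ) + c then x j else 0) = emb N x ((a : ℤ) + 1 - (c : ℤ)) := by
  by_cases h : c ≤ a ∧ a - c < N
  · rw [Finset.sum_eq_single (⟨a - c, h.2⟩ : Fin N)]
    · rw [if_pos (by simp; omega), emb_in _ _ (by omega)]
      congr 1
      ext
      simp
      omega
    · intro j _ hj
      refine if_neg fun hc => hj ?_
      ext
      simp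
      omega
    · intro hmem
      exact absurd (Finset.mem_univ _) hmem
  · rw [Finset.sum_eq_zero, emb_zero]
    · omega
    · intro j _
      refine if_neg ?_
      have := j.2
      omega

lemma mulVec_W {N : ℕ} (x : Fin N → ℝ) (i : Fin (N + 2)) :
    (Wmat N *ᵥ x) i = fd2 (emb N x) ((i : ℤ) - 1) := by
  have hmv : (Wmat N *ᵥ x) i = ∑ j, Wmat N i j * x j := rfl
  have split : ∀ j : Fin N, Wmat N i j * x j =
      (if (i : ℕ) = (j : ℕ) + 0 then x j else 0)
        + (-2) * (if (i : ℕ) = (j : ℕ) + 1 then x j else 0)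
        + (if (i : ℕ) = (j : ℕ) + 2 then x j else 0) := by
    intro j
    unfold Wmat
    by_cases h1 : (i : ℕ) = (j : ℕ) <;> by_cases h2 : (i : ℕ) = (j : ℕ) + 1 <;>
      by_cases h3 : (i : ℕ) = (j : ℕ) + 2 <;> first | omega | simp [h1, h2, h3] <;> ring
  rw [hmv]
  simp_rw [split, Finset.sum_add_distrib, ← Finset.mul_sum, ind_sum_c x i 0, ind_sum_c x i 1,
    ind_sum_c x i 2]
  have e0 : (i : ℤ) + 1 - ((0 : ℕ) : ℤ) = ((i : ℤ) - 1) + 2 := by push_cast; ring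
  have e1 : (i : ℤ) + 1 - ((1 : ℕ) : ℤ) = ((i : ℤ) - 1) + 1 := by push_cast; ring
  have e2 : (i : ℤ) + 1 - ((2 : ℕ) : ℤ) = ((i : ℤ) - 1) := by push_cast; ring
  rw [e0, e1, e2]
  unfold fd2
  ring

lemma mulVec_V {N : ℕ} (x : Fin N → ℝ) (i : Fin (N + 1)) :
    (Vmat N *ᵥ x) i = fd (emb N x) ((i : ℤ)) := by
  have hmv : (Vmat N *ᵥ x) i = ∑ j, Vmat N i j * x j := rfl
  have split : ∀ j : Fin N, Vmat N i j * x j =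
      (if (i : ℕ) = (j : ℕ) + 0 then x j else 0)
        + (-1) * (if (i : ℕ) = (j : ℕ) + 1 then x j else 0) := by
    intro j
    unfold Vmat
    by_cases h1 : (i : ℕ) = (j : ℕ) <;> by_cases h2 : (i : ℕ) = (j : ℕ) + 1 <;>
      first | omega | simp [h1, h2] <;> ring
  rw [hmv]
  simp_rw [split, Finset.sum_add_distrib, ← Finset.mul_sum, ind_sum_c x i 0, ind_sum_c x i 1]
  have e0 : (i : ℤ) + 1 - ((0 : ℕ) : ℤ) = (i : ℤ) + 1 := by push_cast; ring
  have e1 : (i : ℤ) + 1 - ((1 : ℕ) : ℤ) = (i : ℤ) := by push_cast; ring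
  rw [e0, e1]
  unfold fd
  ring

lemma quadW {N : ℕ} (x : Fin N → ℝ) :
    ∑ k ∈ Finset.Icc (1 : ℤ) ((N : ℤ) + 2), (fd2 (emb N x) (k - 2)) ^ 2
      = x ⬝ᵥ ((Wmat N)ᵀ * Wmat N) *ᵥ x := by
  rw [← Matrix.mulVec_mulVec, Matrix.dotProduct_mulVec, Matrix.vecMul_transpose]
  have : (Wmat N *ᵥ x) ⬝ᵥ (Wmat N *ᵥ x) = ∑ i : Fin (N + 2), (fd2 (emb N x) ((i : ℤ) - 1)) ^ 2 := by
    unfold dotProduct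
    exact Finset.sum_congr rfl fun i _ => by rw [mulVec_W]; ring
  rw [this]
  have h2 : ((N : ℤ) + 2) = ((N + 2 : ℕ) : ℤ) := by push_cast; ring
  rw [h2, sum_Icc_fin (N + 2) (fun k => (fd2 (emb N x) (k - 2)) ^ 2)]
  refine Finset.sum_congr rfl fun i _ => ?_
  have e : (i : ℤ) + 1 - 2 = (i : ℤ) - 1 := by ring
  rw [e]

lemma quadV {N : ℕ} (x : Fin N → ℝ) :
    ∑ k ∈ Finset.Icc (1 : ℤ) ((N : ℤ) + 1), (fd (emb N x) (k - 1)) ^ 2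
      = x ⬝ᵥ ((Vmat N)ᵀ * Vmat N) *ᵥ x := by
  rw [← Matrix.mulVec_mulVec, Matrix.dotProduct_mulVec, Matrix.vecMul_transpose]
  have : (Vmat N *ᵥ x) ⬝ᵥ (Vmat N *ᵥ x) = ∑ i : Fin (N + 1), (fd (emb N x) ((i : ℤ))) ^ 2 := by
    unfold dotProduct
    exact Finset.sum_congr rfl fun i _ => by rw [mulVec_V]; ring
  rw [this]
  have h2 : ((N : ℤ) + 1) = ((N + 1 : ℕ) : ℤ) := by push_cast; ring
  rw [h2, sum_Icc_fin (N + 1) (fun k => (fd (emb N x) (k - 1)) ^ 2)]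
  exact Finset.sum_congr rfl fun i _ => by norm_num

lemma boundW {N : ℕ} (x : Fin N → ℝ) :
    ∑ k ∈ Finset.Icc (1 : ℤ) ((N : ℤ) + 2), (fd2 (emb N x) (k - 2)) ^ 2
      ≤ 16 * ∑ k ∈ Finset.Icc (1 : ℤ) (N : ℤ), (emb N x k) ^ 2 := by
  set z := emb N x with hz
  have hzz : ∀ k, ¬(1 ≤ k ∧ k ≤ (N : ℤ)) → z k = 0 := fun k h => emb_zero x k h
  have step : ∀ k : ℤ, (fd2 z (k - 2)) ^ 2
      ≤ 4 * (z k) ^ 2 + 8 * (z (k - 1)) ^ 2 + 4 * (z (k - 2)) ^ 2 := by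
    intro k
    have h : fd2 z (k - 2) = z k - 2 * z (k - 1) + z (k - 2) := by
      unfold fd2
      have e1 : k - 2 + 2 = k := by ring
      have e2 : k - 2 + 1 = k - 1 := by ring
      rw [e1, e2]
    rw [h]
    nlinarith [sq_nonneg (z k + z (k-1)), sq_nonneg (z (k-1) + z (k-2)), sq_nonneg (z k - z (k-2))]
  calc ∑ k ∈ Finset.Icc (1 : ℤ) ((N : ℤ) + 2), (fd2 z (k - 2)) ^ 2
      ≤ ∑ k ∈ Finset.Icc (1 : ℤ) ((N : ℤ) + 2),
          (4 * (z k) ^ 2 + 8 * (z (k - 1)) ^ 2 + 4 * (z (k - 2)) ^ 2) :=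
        Finset.sum_le_sum fun k _ => step k
    _ = 4 * ∑ k ∈ Finset.Icc (1 : ℤ) ((N : ℤ) + 2), (z k) ^ 2
        + 8 * ∑ k ∈ Finset.Icc (1 : ℤ) ((N : ℤ) + 2), (z (k - 1)) ^ 2
        + 4 * ∑ k ∈ Finset.Icc (1 : ℤ) ((N : ℤ) + 2), (z (k - 2)) ^ 2 := by
        rw [Finset.sum_add_distrib, Finset.sum_add_distrib, Finset.mul_sum, Finset.mul_sum,
          Finset.mul_sum]
    _ ≤ 16 * ∑ k ∈ Finset.Icc (1 : ℤ) (N : ℤ), (z k) ^ 2 := by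
        have s0 : ∑ k ∈ Finset.Icc (1 : ℤ) ((N : ℤ) + 2), (z k) ^ 2
            = ∑ k ∈ Finset.Icc (1 : ℤ) (N : ℤ), (z k) ^ 2 :=
          sum_zero_ext z hzz 1 ((N : ℤ) + 2) le_rfl (by omega)
        have s1 : ∑ k ∈ Finset.Icc (1 : ℤ) ((N : ℤ) + 2), (z (k - 1)) ^ 2
            = ∑ k ∈ Finset.Icc (1 : ℤ) (N : ℤ), (z k) ^ 2 := by
          calc ∑ k ∈ Finset.Icc (1 : ℤ) ((N : ℤ) + 2), (z (k - 1)) ^ 2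
              = ∑ k ∈ Finset.Icc (0 : ℤ) ((N : ℤ) + 1), (z k) ^ 2 := by
                simp only [sub_eq_add_neg]
                rw [sum_shift (fun k => (z k) ^ 2) 1 ((N : ℤ) + 2) (-1)]
                refine Finset.sum_congr ?_ fun k _ => rfl
                congr 1 <;> ring
            _ = ∑ k ∈ Finset.Icc (1 : ℤ) (N : ℤ), (z k) ^ 2 :=
                sum_zero_ext z hzz 0 ((N : ℤ) + 1) (by omega) (by omega)
        have s2 : ∑ k ∈ Finset.Icc (1 : ℤ) ((N : ℤ) + 2), (z (k - 2)) ^ 2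
            = ∑ k ∈ Finset.Icc (1 : ℤ) (N : ℤ), (z k) ^ 2 := by
          calc ∑ k ∈ Finset.Icc (1 : ℤ) ((N : ℤ) + 2), (z (k - 2)) ^ 2
              = ∑ k ∈ Finset.Icc (-1 : ℤ) ((N : ℤ)), (z k) ^ 2 := by
                simp only [sub_eq_add_neg]
                rw [sum_shift (fun k => (z k) ^ 2) 1 ((N : ℤ) + 2) (-2)]
                refine Finset.sum_congr ?_ fun k _ => rfl
                congr 1 <;> ring
            _ = ∑ k ∈ Finset.Icc (1 : ℤ) (N : ℤ), (z k) ^ 2 :=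
                sum_zero_ext z hzz (-1) ((N : ℤ)) (by omega) (by omega)
        rw [s0, s1, s2]
        have hnn : (0:ℝ) ≤ ∑ k ∈ Finset.Icc (1 : ℤ) (N : ℤ), (z k) ^ 2 :=
          Finset.sum_nonneg fun k _ => sq_nonneg _
        linarith

lemma boundV {N : ℕ} (x : Fin N → ℝ) :
    ∑ k ∈ Finset.Icc (1 : ℤ) ((N : ℤ) + 1), (fd (emb N x) (k - 1)) ^ 2
      ≤ 4 * ∑ k ∈ Finset.Icc (1 : ℤ) (N : ℤ), (emb N x k) ^ 2 := by
  set z := emb N x with hz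
  have hzz : ∀ k, ¬(1 ≤ k ∧ k ≤ (N : ℤ)) → z k = 0 := fun k h => emb_zero x k h
  have step : ∀ k : ℤ, (fd z (k - 1)) ^ 2 ≤ 2 * (z k) ^ 2 + 2 * (z (k - 1)) ^ 2 := by
    intro k
    have h : fd z (k - 1) = z k - z (k - 1) := by
      unfold fd
      have e1 : k - 1 + 1 = k := by ring
      rw [e1]
    rw [h]
    nlinarith [sq_nonneg (z k + z (k - 1))]
  calc ∑ k ∈ Finset.Icc (1 : ℤ) ((N : ℤ) + 1), (fd z (k - 1)) ^ 2
      ≤ ∑ k ∈ Finset.Icc (1 : ℤ) ((N : ℤ) + 1), (2 * (z k) ^ 2 + 2 * (z (k - 1)) ^ 2) :=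
        Finset.sum_le_sum fun k _ => step k
    _ = 2 * ∑ k ∈ Finset.Icc (1 : ℤ) ((N : ℤ) + 1), (z k) ^ 2
        + 2 * ∑ k ∈ Finset.Icc (1 : ℤ) ((N : ℤ) + 1), (z (k - 1)) ^ 2 := by
        rw [Finset.sum_add_distrib, Finset.mul_sum, Finset.mul_sum]
    _ ≤ 4 * ∑ k ∈ Finset.Icc (1 : ℤ) (N : ℤ), (z k) ^ 2 := by
        have s0 : ∑ k ∈ Finset.Icc (1 : ℤ) ((N : ℤ) + 1), (z k) ^ 2
            = ∑ k ∈ Finset.Icc (1 : ℤ) (N : ℤ), (z k) ^ 2 :=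
          sum_zero_ext z hzz 1 ((N : ℤ) + 1) le_rfl (by omega)
        have s1 : ∑ k ∈ Finset.Icc (1 : ℤ) ((N : ℤ) + 1), (z (k - 1)) ^ 2
            = ∑ k ∈ Finset.Icc (1 : ℤ) (N : ℤ), (z k) ^ 2 := by
          calc ∑ k ∈ Finset.Icc (1 : ℤ) ((N : ℤ) + 1), (z (k - 1)) ^ 2
              = ∑ k ∈ Finset.Icc (0 : ℤ) ((N : ℤ)), (z k) ^ 2 := by
                simp only [sub_eq_add_neg]
                rw [sum_shift (fun k => (z k) ^ 2) 1 ((N : ℤ) + 1) (-1)]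
                refine Finset.sum_congr ?_ fun k _ => rfl
                congr 1 <;> ring
            _ = ∑ k ∈ Finset.Icc (1 : ℤ) (N : ℤ), (z k) ^ 2 :=
                sum_zero_ext z hzz 0 ((N : ℤ)) (by omega) (by omega)
        rw [s0, s1]
        have hnn : (0:ℝ) ≤ ∑ k ∈ Finset.Icc (1 : ℤ) (N : ℤ), (z k) ^ 2 :=
          Finset.sum_nonneg fun k _ => sq_nonneg _
        linarith


lemma Flower (f : ℝ → ℝ) (hf : Continuous f) (L β : ℝ) (hβ : β < L)
    (hlim : Tendsto (fun s => f s / s) atTop (nhds L))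
    (S : ℝ) (hS : 0 < S) (hodd : ∀ s, S < s → f (-s) ≤ -f s) :
    ∃ C : ℝ, ∀ s : ℝ, β / 2 * s ^ 2 - C ≤ ∫ t in (0:ℝ)..s, f t := by
  set G : ℝ → ℝ := fun s => ∫ t in (0:ℝ)..s, f t with hG
  have hGd : ∀ b : ℝ, HasDerivAt G (f b) b := fun b =>
    intervalIntegral.integral_hasDerivAt_right (hf.intervalIntegrable 0 b)
      (hf.aestronglyMeasurable.stronglyMeasurableAtFilter) hf.continuousAt
  have hGc : Continuous G := by
    rw [continuous_iff_continuousAt]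
    exact fun b => (hGd b).differentiableAt.continuousAt
  -- threshold T₀
  have hev : ∀ᶠ s in atTop, β < f s / s := hlim.eventually (eventually_gt_nhds hβ)
  obtain ⟨T, hT⟩ := hev.exists_forall_of_atTop
  set T₀ : ℝ := max T (S + 1) with hT₀
  have hT₀S : S + 1 ≤ T₀ := le_max_right _ _
  have hT₀pos : 0 < T₀ := lt_of_lt_of_le (by linarith) hT₀S
  have hfs : ∀ s : ℝ, T₀ ≤ s → β * s ≤ f s := by
    intro s hs
    have hs0 : 0 < s := lt_of_lt_of_le hT₀pos hs
    have := hT s (le_trans (le_max_left _ _) hs)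
    calc β * s ≤ (f s / s) * s := by nlinarith
    _ = f s := by field_simp
  -- growth for s ≥ T₀
  have hup : ∀ s : ℝ, T₀ ≤ s → G T₀ + (β / 2 * s ^ 2 - β / 2 * T₀ ^ 2) ≤ G s := by
    intro s hs
    have hle : ∫ t in T₀..s, β * t ≤ ∫ t in T₀..s, f t := by
      apply intervalIntegral.integral_mono_on hs
      · exact (continuous_const.mul continuous_id).intervalIntegrable _ _
      · exact hf.intervalIntegrable _ _
      · intro t ht
        exact hfs t ht.1
    have hval : ∫ t in T₀..s, β * t = β / 2 * s ^ 2 - β / 2 * T₀ ^ 2 := by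
      rw [intervalIntegral.integral_const_mul, integral_id]
      ring
    have hsplit : G s - G T₀ = ∫ t in T₀..s, f t :=
      intervalIntegral.integral_interval_sub_left (hf.intervalIntegrable 0 s)
        (hf.intervalIntegrable 0 T₀)
    linarith [hval ▸ hle, hsplit]
  -- growth for s ≤ -T₀
  have hdown : ∀ s : ℝ, s ≤ -T₀ →
      -(∫ u in (0:ℝ)..(S+1), f (-u)) + G T₀ + (β / 2 * s ^ 2 - β / 2 * T₀ ^ 2) - G (S+1) ≤ G s := by
    intro s hs
    have hneg : G s = -∫ u in (0:ℝ)..(-s), f (-u) := by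
      have h1 : (∫ u in (0:ℝ)..(-s), f (-u)) = ∫ x in s..(0:ℝ), f x := by
        have := intervalIntegral.integral_comp_neg (a := (0:ℝ)) (b := -s) (f := f)
        simpa using this
      rw [h1, intervalIntegral.integral_symm]
      simp [hG]
    have hrs : T₀ ≤ -s := by linarith
    have hsplit2 : (∫ u in (0:ℝ)..(-s), f (-u))
        = (∫ u in (0:ℝ)..(S+1), f (-u)) + ∫ u in (S+1)..(-s), f (-u) :=
      (intervalIntegral.integral_add_adjacent_intervals
        ((hf.comp continuous_neg).intervalIntegrable _ _)
        ((hf.comp continuous_neg).intervalIntegrable _ _)).symm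
    have hmono : (∫ u in (S+1)..(-s), f (-u)) ≤ ∫ u in (S+1)..(-s), -f u := by
      apply intervalIntegral.integral_mono_on (by linarith)
      · exact (hf.comp continuous_neg).intervalIntegrable _ _
      · exact hf.neg.intervalIntegrable _ _
      · intro u hu
        exact hodd u (by linarith [hu.1])
    have hval2 : (∫ u in (S+1)..(-s), -f u) = -(G (-s) - G (S+1)) := by
      rw [intervalIntegral.integral_neg]
      congr 1
      exact (intervalIntegral.integral_interval_sub_left (hf.intervalIntegrable 0 (-s))
        (hf.intervalIntegrable 0 (S+1))).symm
    have hGs : G T₀ + (β / 2 * (-s) ^ 2 - β / 2 * T₀ ^ 2) ≤ G (-s) := hup (-s) hrs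
    have hsq : (-s) ^ 2 = s ^ 2 := by ring
    rw [hneg, hsplit2]
    rw [hval2] at hmono
    rw [hsq] at hGs
    linarith
  -- bounded on the middle
  obtain ⟨m, hm⟩ : ∃ m : ℝ, ∀ s ∈ Set.Icc (-T₀) T₀, m ≤ G s := by
    obtain ⟨x₀, -, hx₀⟩ := (isCompact_Icc (a := -T₀) (b := T₀)).exists_isMinOn
      (Set.nonempty_Icc.2 (by linarith)) hGc.continuousOn
    exact ⟨G x₀, fun s hs => hx₀ hs⟩
  refine ⟨max (|β| / 2 * T₀ ^ 2 - m)
    (max (|β| / 2 * T₀ ^ 2 + |∫ u in (0:ℝ)..(S+1), f (-u)| + |G T₀| + |G (S+1)|)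
      (|β| / 2 * T₀ ^ 2 + |G T₀|)), fun s => ?_⟩
  rcases le_total s (-T₀) with hcase | hcase
  · have := hdown s hcase
    have h1 : -(∫ u in (0:ℝ)..(S+1), f (-u)) ≥ -|∫ u in (0:ℝ)..(S+1), f (-u)| :=
      neg_le_neg (le_abs_self _)
    have h2 : G T₀ ≥ -|G T₀| := neg_abs_le _
    have h3 : -G (S+1) ≥ -|G (S+1)| := neg_le_neg (le_abs_self _)
    have h4 : β / 2 * T₀ ^ 2 ≤ |β| / 2 * T₀ ^ 2 := by
      have : β ≤ |β| := le_abs_self β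
      nlinarith [sq_nonneg T₀]
    have hC : β / 2 * s ^ 2
        - (|β| / 2 * T₀ ^ 2 + |∫ u in (0:ℝ)..(S+1), f (-u)| + |G T₀| + |G (S+1)|) ≤ G s := by
      linarith
    refine le_trans ?_ hC
    have := le_max_left (|β| / 2 * T₀ ^ 2 + |∫ u in (0:ℝ)..(S+1), f (-u)| + |G T₀| + |G (S+1)|)
      (|β| / 2 * T₀ ^ 2 + |G T₀|)
    have := le_max_right (|β| / 2 * T₀ ^ 2 - m)
      (max (|β| / 2 * T₀ ^ 2 + |∫ u in (0:ℝ)..(S+1), f (-u)| + |G T₀| + |G (S+1)|)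
        (|β| / 2 * T₀ ^ 2 + |G T₀|))
    linarith
  rcases le_total T₀ s with hcase2 | hcase2
  · have := hup s hcase2
    have h2 : G T₀ ≥ -|G T₀| := neg_abs_le _
    have h4 : β / 2 * T₀ ^ 2 ≤ |β| / 2 * T₀ ^ 2 := by
      have : β ≤ |β| := le_abs_self β
      nlinarith [sq_nonneg T₀]
    have hC : β / 2 * s ^ 2 - (|β| / 2 * T₀ ^ 2 + |G T₀|) ≤ G s := by linarith
    refine le_trans ?_ hC
    have := le_max_right (|β| / 2 * T₀ ^ 2 + |∫ u in (0:ℝ)..(S+1), f (-u)| + |G T₀| + |G (S+1)|)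
      (|β| / 2 * T₀ ^ 2 + |G T₀|)
    have := le_max_right (|β| / 2 * T₀ ^ 2 - m)
      (max (|β| / 2 * T₀ ^ 2 + |∫ u in (0:ℝ)..(S+1), f (-u)| + |G T₀| + |G (S+1)|)
        (|β| / 2 * T₀ ^ 2 + |G T₀|))
    linarith
  · have hmem : s ∈ Set.Icc (-T₀) T₀ := ⟨hcase, hcase2⟩
    have hGm := hm s hmem
    have hsq : s ^ 2 ≤ T₀ ^ 2 := sq_le_sq' hcase hcase2
    have h4 : β / 2 * s ^ 2 ≤ |β| / 2 * T₀ ^ 2 := by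
      have hb : β ≤ |β| := le_abs_self β
      have hb2 : -β ≤ |β| := neg_le_abs β
      rcases le_total 0 β with hβ0 | hβ0
      · nlinarith [sq_nonneg s]
      · nlinarith [sq_nonneg s, sq_nonneg T₀]
    have hC : β / 2 * s ^ 2 - (|β| / 2 * T₀ ^ 2 - m) ≤ G s := by linarith
    refine le_trans ?_ hC
    have := le_max_left (|β| / 2 * T₀ ^ 2 - m)
      (max (|β| / 2 * T₀ ^ 2 + |∫ u in (0:ℝ)..(S+1), f (-u)| + |G T₀| + |G (S+1)|)
        (|β| / 2 * T₀ ^ 2 + |G T₀|))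
    linarith


lemma fd2_eval (z : ℤ → ℝ) (k : ℤ) : fd2 z (k - 2) = z k - 2 * z (k - 1) + z (k - 2) := by
  unfold fd2
  have e1 : k - 2 + 2 = k := by ring
  have e2 : k - 2 + 1 = k - 1 := by ring
  rw [e1, e2]

lemma fd_eval (z : ℤ → ℝ) (k : ℤ) : fd z (k - 1) = z k - z (k - 1) := by
  unfold fd
  have e1 : k - 1 + 1 = k := by ring
  rw [e1]

lemma fd2_lin (a b : ℤ → ℝ) (t : ℝ) (m : ℤ) :
    fd2 (fun s => a s + t * b s) m = fd2 a m + t * fd2 b m := by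
  unfold fd2; ring

lemma fd_lin (a b : ℤ → ℝ) (t : ℝ) (m : ℤ) :
    fd (fun s => a s + t * b s) m = fd a m + t * fd b m := by
  unfold fd; ring

lemma cont_emb (N : ℕ) (t : ℤ) : Continuous (fun x : Fin N → ℝ => emb N x t) := by
  unfold emb
  by_cases h : 1 ≤ t ∧ t ≤ (N : ℤ)
  · simp only [dif_pos h]
    exact continuous_apply _
  · simp only [dif_neg h]
    exact continuous_const

lemma Fint_hasDerivAt {f : ℤ → ℝ → ℝ} {k : ℤ} (hf : Continuous (f k)) (b : ℝ) :
    HasDerivAt (Fint f k) (f k b) b :=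
  intervalIntegral.integral_hasDerivAt_right (hf.intervalIntegrable 0 b)
    hf.aestronglyMeasurable.stronglyMeasurableAtFilter hf.continuousAt

lemma cont_Fint {f : ℤ → ℝ → ℝ} {k : ℤ} (hf : Continuous (f k)) : Continuous (Fint f k) := by
  rw [continuous_iff_continuousAt]
  exact fun b => (Fint_hasDerivAt hf b).differentiableAt.continuousAt

lemma emb_single {N : ℕ} (j : Fin N) (t : ℤ) :
    emb N (Pi.single j (1 : ℝ)) t = if t = (j : ℤ) + 1 then 1 else 0 := by
  by_cases h : 1 ≤ t ∧ t ≤ (N : ℤ)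
  · rw [emb_in _ _ h, Pi.single_apply]
    by_cases he : t = (j : ℤ) + 1
    · rw [if_pos he, if_pos]
      ext
      simp
      omega
    · rw [if_neg he, if_neg]
      intro hc
      apply he
      have := congrArg Fin.val hc
      simp only at this
      omega
  · rw [emb_zero _ _ h, if_neg]
    have := j.2
    omega

lemma J_congr {N : ℕ} {p q : ℤ → ℝ} {f : ℤ → ℝ → ℝ} {y y' : ℤ → ℝ}
    (h : ∀ k : ℤ, -1 ≤ k → k ≤ (N : ℤ) + 2 → y k = y' k) :
    _root_.J N p q f y = _root_.J N p q f y' := by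
  unfold _root_.J
  have h1 : ∀ k ∈ Finset.Icc (1 : ℤ) ((N : ℤ) + 2),
      p k / 2 * (fd2 y (k - 2)) ^ 2 = p k / 2 * (fd2 y' (k - 2)) ^ 2 := by
    intro k hk
    rw [Finset.mem_Icc] at hk
    rw [fd2_eval, fd2_eval, h k (by omega) (by omega), h (k - 1) (by omega) (by omega),
      h (k - 2) (by omega) (by omega)]
  have h2 : ∀ k ∈ Finset.Icc (1 : ℤ) ((N : ℤ) + 1),
      q k / 2 * (fd y (k - 1)) ^ 2 = q k / 2 * (fd y' (k - 1)) ^ 2 := by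
    intro k hk
    rw [Finset.mem_Icc] at hk
    rw [fd_eval, fd_eval, h k (by omega) (by omega), h (k - 1) (by omega) (by omega)]
  have h3 : ∀ k ∈ Finset.Icc (1 : ℤ) (N : ℤ), Fint f k (y k) = Fint f k (y' k) := by
    intro k hk
    rw [Finset.mem_Icc] at hk
    rw [h k (by omega) (by omega)]
  rw [Finset.sum_congr rfl h1, Finset.sum_congr rfl h2, Finset.sum_congr rfl h3]

lemma bc_emb {N : ℕ} (x : Fin N → ℝ) : bc N (emb N x) :=
  ⟨emb_zero x _ (by omega), emb_zero x _ (by omega), emb_zero x _ (by omega),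
    emb_zero x _ (by omega)⟩

/-- If `lim_{s→+∞} f(k,s)/s > α₁ = η(q)·q_max − η'(p)·p_min` for every `k` and
`f(k,−s) ≤ −f(k,s)` for `s > S`, then `J` is coercive on `E` and the BVP has at
least one solution. -/
theorem stmt_14 (N : ℕ) (hN : 1 ≤ N) (p q : ℤ → ℝ) (f : ℤ → ℝ → ℝ)
    (hf : ∀ k ∈ Finset.Icc (1 : ℤ) (N : ℤ), Continuous (f k))
    (lam1 lam2 : ℝ)
    (hlam1 : IsSmallestEigenvalue ((Vmat N)ᵀ * Vmat N) lam1)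
    (hlam2 : IsSmallestEigenvalue ((Wmat N)ᵀ * Wmat N) lam2)
    (pmin qmax : ℝ)
    (hpmin : IsLeast (p '' Set.Icc (1 : ℤ) ((N : ℤ) + 2)) pmin)
    (hqmax : IsGreatest (q '' Set.Icc (1 : ℤ) ((N : ℤ) + 1)) qmax)
    (alpha1 : ℝ)
    (halpha1 : alpha1 = (if qmax < 0 then lam1 else 4) * qmax
        - (if 0 ≤ pmin then lam2 else 16) * pmin)
    (L : ℤ → ℝ)
    (hlim : ∀ k ∈ Finset.Icc (1 : ℤ) (N : ℤ),
      Filter.Tendsto (fun s : ℝ => f k s / s) Filter.atTop (nhds (L k)))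
    (hgt : ∀ k ∈ Finset.Icc (1 : ℤ) (N : ℤ), alpha1 < L k)
    (S : ℝ) (hS : 0 < S)
    (hodd : ∀ k ∈ Finset.Icc (1 : ℤ) (N : ℤ), ∀ s : ℝ, S < s → f k (-s) ≤ -f k s) :
    (∀ C : ℝ, ∃ R : ℝ, ∀ y : ℤ → ℝ, bc N y →
        R ≤ ∑ k ∈ Finset.Icc (1 : ℤ) (N : ℤ), (y k) ^ 2 → C ≤ J N p q f y)
      ∧ ∃ y : ℤ → ℝ, bc N y ∧ solves N p q f y := by
    classical
  have hIcc1 : (1 : ℤ) ∈ Finset.Icc (1 : ℤ) (N : ℤ) := by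
    rw [Finset.mem_Icc]; omega
  have hne : ((Finset.Icc (1 : ℤ) (N : ℤ)).image L).Nonempty :=
    ⟨L 1, Finset.mem_image_of_mem L hIcc1⟩
  set Lmin := ((Finset.Icc (1 : ℤ) (N : ℤ)).image L).min' hne with hLmin
  have hLmin_le : ∀ k ∈ Finset.Icc (1 : ℤ) (N : ℤ), Lmin ≤ L k := fun k hk =>
    Finset.min'_le _ _ (Finset.mem_image_of_mem L hk)
  have hαLmin : alpha1 < Lmin := by
    obtain ⟨k, hk, hk2⟩ := Finset.mem_image.mp (Finset.min'_mem _ hne)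
    rw [hLmin, ← hk2]
    exact hgt k hk
  set β : ℝ := (alpha1 + Lmin) / 2 with hβdef
  have hβα : alpha1 < β := by rw [hβdef]; linarith
  have hβL : ∀ k ∈ Finset.Icc (1 : ℤ) (N : ℤ), β < L k := fun k hk =>
    lt_of_lt_of_le (by rw [hβdef]; linarith [hLmin_le k hk]) (hLmin_le k hk)
  have hCex : ∀ k : ℤ, ∃ C : ℝ, ∀ s : ℝ, k ∈ Finset.Icc (1 : ℤ) (N : ℤ) →
      β / 2 * s ^ 2 - C ≤ Fint f k s := by
    intro k
    by_cases hk : k ∈ Finset.Icc (1 : ℤ) (N : ℤ)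
    · obtain ⟨C, hC⟩ := Flower (f k) (hf k hk) (L k) β (hβL k hk) (hlim k hk) S hS (hodd k hk)
      exact ⟨C, fun s _ => hC s⟩
    · exact ⟨0, fun s h => absurd h hk⟩
  choose Cf hCf using hCex
  set Ct : ℝ := ∑ k ∈ Finset.Icc (1 : ℤ) (N : ℤ), Cf k with hCtdef
  have hWH : ((Wmat N)ᵀ * Wmat N).IsHermitian := by
    simpa using Matrix.isHermitian_conjTranspose_mul_self (Wmat N)
  have hVH : ((Vmat N)ᵀ * Vmat N).IsHermitian := by
    simpa using Matrix.isHermitian_conjTranspose_mul_self (Vmat N)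
  -- the key coercivity estimate
  have key : ∀ x : Fin N → ℝ,
      (β - alpha1) / 2 * (∑ i, x i ^ 2) - Ct ≤ _root_.J N p q f (emb N x) := by
    intro x
    have hsx : ∑ k ∈ Finset.Icc (1 : ℤ) (N : ℤ), (emb N x k) ^ 2 = ∑ i, x i ^ 2 :=
      emb_parseval x
    have hsnn : (0:ℝ) ≤ ∑ i, x i ^ 2 := Finset.sum_nonneg fun i _ => sq_nonneg _
    -- first sum
    have h1 : (if 0 ≤ pmin then lam2 else 16) * pmin / 2 * (∑ i, x i ^ 2)
        ≤ ∑ k ∈ Finset.Icc (1 : ℤ) ((N : ℤ) + 2), p k / 2 * (fd2 (emb N x) (k - 2)) ^ 2 := by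
      have hstep : pmin / 2 * (∑ k ∈ Finset.Icc (1 : ℤ) ((N : ℤ) + 2),
            (fd2 (emb N x) (k - 2)) ^ 2)
          ≤ ∑ k ∈ Finset.Icc (1 : ℤ) ((N : ℤ) + 2), p k / 2 * (fd2 (emb N x) (k - 2)) ^ 2 := by
        rw [Finset.mul_sum]
        refine Finset.sum_le_sum fun k hk => ?_
        have hpk : pmin ≤ p k := by
          rw [Finset.mem_Icc] at hk
          exact hpmin.2 ⟨k, Set.mem_Icc.mpr hk, rfl⟩
        nlinarith [sq_nonneg (fd2 (emb N x) (k - 2))]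
      by_cases hp : 0 ≤ pmin
      · rw [if_pos hp]
        have hray := rayleigh _ hWH lam2 hlam2 x
        rw [← quadW x] at hray
        have h2' : pmin / 2 * (lam2 * ∑ i, x i ^ 2)
            ≤ pmin / 2 * ∑ k ∈ Finset.Icc (1 : ℤ) ((N : ℤ) + 2),
              (fd2 (emb N x) (k - 2)) ^ 2 :=
          mul_le_mul_of_nonneg_left hray (by linarith)
        calc lam2 * pmin / 2 * (∑ i, x i ^ 2) = pmin / 2 * (lam2 * ∑ i, x i ^ 2) := by ring
          _ ≤ _ := h2'
          _ ≤ _ := hstep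
      · rw [if_neg hp]
        have hb := boundW x
        rw [hsx] at hb
        have h2' : pmin / 2 * (16 * ∑ i, x i ^ 2)
            ≤ pmin / 2 * ∑ k ∈ Finset.Icc (1 : ℤ) ((N : ℤ) + 2),
              (fd2 (emb N x) (k - 2)) ^ 2 :=
          mul_le_mul_of_nonpos_left hb (by linarith)
        calc (16:ℝ) * pmin / 2 * (∑ i, x i ^ 2) = pmin / 2 * (16 * ∑ i, x i ^ 2) := by ring
          _ ≤ _ := h2'
          _ ≤ _ := hstep
    -- second sum
    have h2 : ∑ k ∈ Finset.Icc (1 : ℤ) ((N : ℤ) + 1), q k / 2 * (fd (emb N x) (k - 1)) ^ 2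
        ≤ (if qmax < 0 then lam1 else 4) * qmax / 2 * (∑ i, x i ^ 2) := by
      have hstep : ∑ k ∈ Finset.Icc (1 : ℤ) ((N : ℤ) + 1), q k / 2 * (fd (emb N x) (k - 1)) ^ 2
          ≤ qmax / 2 * (∑ k ∈ Finset.Icc (1 : ℤ) ((N : ℤ) + 1),
            (fd (emb N x) (k - 1)) ^ 2) := by
        rw [Finset.mul_sum]
        refine Finset.sum_le_sum fun k hk => ?_
        have hqk : q k ≤ qmax := by
          rw [Finset.mem_Icc] at hk
          exact hqmax.2 ⟨k, Set.mem_Icc.mpr hk, rfl⟩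
        nlinarith [sq_nonneg (fd (emb N x) (k - 1))]
      by_cases hq : qmax < 0
      · rw [if_pos hq]
        have hray := rayleigh _ hVH lam1 hlam1 x
        rw [← quadV x] at hray
        have h2' : qmax / 2 * ∑ k ∈ Finset.Icc (1 : ℤ) ((N : ℤ) + 1),
              (fd (emb N x) (k - 1)) ^ 2
            ≤ qmax / 2 * (lam1 * ∑ i, x i ^ 2) :=
          mul_le_mul_of_nonpos_left hray (by linarith)
        calc ∑ k ∈ Finset.Icc (1 : ℤ) ((N : ℤ) + 1), q k / 2 * (fd (emb N x) (k - 1)) ^ 2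
            ≤ _ := hstep
          _ ≤ qmax / 2 * (lam1 * ∑ i, x i ^ 2) := h2'
          _ = lam1 * qmax / 2 * (∑ i, x i ^ 2) := by ring
      · rw [if_neg hq]
        push_neg at hq
        have hb := boundV x
        rw [hsx] at hb
        have h2' : qmax / 2 * ∑ k ∈ Finset.Icc (1 : ℤ) ((N : ℤ) + 1),
              (fd (emb N x) (k - 1)) ^ 2
            ≤ qmax / 2 * (4 * ∑ i, x i ^ 2) :=
          mul_le_mul_of_nonneg_left hb (by linarith)
        calc ∑ k ∈ Finset.Icc (1 : ℤ) ((N : ℤ) + 1), q k / 2 * (fd (emb N x) (k - 1)) ^ 2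
            ≤ _ := hstep
          _ ≤ qmax / 2 * (4 * ∑ i, x i ^ 2) := h2'
          _ = 4 * qmax / 2 * (∑ i, x i ^ 2) := by ring
    -- third sum
    have h3 : β / 2 * (∑ i, x i ^ 2) - Ct
        ≤ ∑ k ∈ Finset.Icc (1 : ℤ) (N : ℤ), Fint f k (emb N x k) := by
      have : ∑ k ∈ Finset.Icc (1 : ℤ) (N : ℤ), (β / 2 * (emb N x k) ^ 2 - Cf k)
          ≤ ∑ k ∈ Finset.Icc (1 : ℤ) (N : ℤ), Fint f k (emb N x k) :=
        Finset.sum_le_sum fun k hk => hCf k (emb N x k) hk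
      rw [Finset.sum_sub_distrib, ← Finset.mul_sum, hsx] at this
      rw [← hCtdef] at this
      exact this
    show _ ≤ _root_.J N p q f (emb N x)
    unfold _root_.J
    have h4 : (β - alpha1) / 2 * (∑ i, x i ^ 2)
        = (if 0 ≤ pmin then lam2 else 16) * pmin / 2 * (∑ i, x i ^ 2)
          - (if qmax < 0 then lam1 else 4) * qmax / 2 * (∑ i, x i ^ 2)
          + β / 2 * (∑ i, x i ^ 2) := by
      rw [halpha1]; ring
    linarith [h1, h2, h3, h4]
  have hc1pos : (0:ℝ) < (β - alpha1) / 2 := by linarith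
  constructor
  · -- coercivity
    intro C
    refine ⟨(C + Ct) / ((β - alpha1) / 2), fun y hy hR => ?_⟩
    set x : Fin N → ℝ := fun i => y ((i : ℤ) + 1) with hx
    have hagree : ∀ k : ℤ, -1 ≤ k → k ≤ (N : ℤ) + 2 → emb N x k = y k := by
      intro k hk1 hk2
      by_cases h : 1 ≤ k ∧ k ≤ (N : ℤ)
      · rw [emb_in _ _ h, hx]
        simp only
        congr 1
        omega
      · rw [emb_zero _ _ h]
        have : k = -1 ∨ k = 0 ∨ k = (N : ℤ) + 1 ∨ k = (N : ℤ) + 2 := by omega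
        rcases this with rfl | rfl | rfl | rfl
        · exact hy.1.symm
        · exact hy.2.1.symm
        · exact hy.2.2.1.symm
        · exact hy.2.2.2.symm
    have hJ : _root_.J N p q f (emb N x) = _root_.J N p q f y := J_congr hagree
    have hsum : ∑ i, x i ^ 2 = ∑ k ∈ Finset.Icc (1 : ℤ) (N : ℤ), (y k) ^ 2 :=
      (sum_Icc_fin N fun k => (y k) ^ 2).symm
    have hkey := key x
    rw [hJ, hsum] at hkey
    have hRR : C + Ct ≤ (∑ k ∈ Finset.Icc (1 : ℤ) (N : ℤ), (y k) ^ 2) * ((β - alpha1) / 2) :=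
      (div_le_iff₀ hc1pos).mp hR
    nlinarith [hkey, hRR]
  · -- existence
    set g : (Fin N → ℝ) → ℝ := fun x => _root_.J N p q f (emb N x) with hgdef
    have hc2 : ∀ k : ℤ, Continuous fun x : Fin N → ℝ => fd2 (emb N x) (k - 2) := by
      intro k
      have he : (fun x : Fin N → ℝ => fd2 (emb N x) (k - 2))
          = fun x => emb N x k - 2 * emb N x (k - 1) + emb N x (k - 2) :=
        funext fun x => fd2_eval _ k
      rw [he]
      exact ((cont_emb N k).sub (continuous_const.mul (cont_emb N (k - 1)))).add
        (cont_emb N (k - 2))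
    have hc1' : ∀ k : ℤ, Continuous fun x : Fin N → ℝ => fd (emb N x) (k - 1) := by
      intro k
      have he : (fun x : Fin N → ℝ => fd (emb N x) (k - 1))
          = fun x => emb N x k - emb N x (k - 1) := funext fun x => fd_eval _ k
      rw [he]
      exact (cont_emb N k).sub (cont_emb N (k - 1))
    have hgc : Continuous g := by
      rw [hgdef]
      unfold _root_.J
      refine Continuous.add (Continuous.sub ?_ ?_) ?_
      · exact continuous_finset_sum _ fun k _ =>
          continuous_const.mul ((hc2 k).pow 2)
      · exact continuous_finset_sum _ fun k _ =>
          continuous_const.mul ((hc1' k).pow 2)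
      · refine continuous_finset_sum _ fun k hk => ?_
        exact (cont_Fint (hf k hk)).comp (cont_emb N k)
    have hcoer : ∀ x, (β - alpha1) / 2 * (∑ i, x i ^ 2) - Ct ≤ g x := key
    set K : Set (Fin N → ℝ) := {x | g x ≤ g 0} with hKdef
    have hKne : (0 : Fin N → ℝ) ∈ K := by
      simp only [hKdef, Set.mem_setOf_eq, le_refl]
    have hKc : IsClosed K := isClosed_le hgc continuous_const
    have hKb : ∀ x ∈ K, ∑ i, x i ^ 2 ≤ (g 0 + Ct) / ((β - alpha1) / 2) := by
      intro x hxK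
      rw [le_div_iff₀ hc1pos]
      have h1 := hcoer x
      have h2 : g x ≤ g 0 := hxK
      nlinarith
    have hKsub : K ⊆ Metric.closedBall 0 (Real.sqrt ((g 0 + Ct) / ((β - alpha1) / 2))) := by
      intro x hxK
      rw [Metric.mem_closedBall, dist_zero_right]
      rw [pi_norm_le_iff_of_nonneg (Real.sqrt_nonneg _)]
      intro i
      rw [Real.norm_eq_abs, ← Real.sqrt_sq_eq_abs]
      apply Real.sqrt_le_sqrt
      have h1 : x i ^ 2 ≤ ∑ i', x i' ^ 2 :=
        Finset.single_le_sum (fun i' _ => sq_nonneg (x i')) (Finset.mem_univ i)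
      linarith [hKb x hxK]
    have hKcomp : IsCompact K :=
      (isCompact_closedBall (0 : Fin N → ℝ) _).of_isClosed_subset hKc hKsub
    obtain ⟨x₀, hx₀K, hx₀min⟩ := hKcomp.exists_isMinOn ⟨0, hKne⟩ hgc.continuousOn
    have hglobal : ∀ x, g x₀ ≤ g x := by
      intro x
      by_cases hxK : x ∈ K
      · exact hx₀min hxK
      · have h0 : g x₀ ≤ g 0 := hx₀min hKne
        have h1 : g 0 < g x := lt_of_not_ge hxK
        linarith
    refine ⟨emb N x₀, bc_emb x₀, fun k hk => ?_⟩
    have hkmem := hk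
    rw [Finset.mem_Icc] at hk
    set y : ℤ → ℝ := emb N x₀ with hydef
    set j : Fin N := ⟨(k - 1).toNat, by omega⟩ with hjdef
    have hjk : (j : ℤ) + 1 = k := by rw [hjdef]; simp; omega
    set d : Fin N → ℝ := Pi.single j 1 with hddef
    have hindB : ∀ i : ℤ, emb N d i = if i = k then 1 else 0 := by
      intro i
      rw [hddef, emb_single, hjk]
    set φ : ℝ → ℝ := fun t => g (x₀ + t • d) with hφdef
    have hloc : IsLocalMin φ 0 := by
      refine Filter.Eventually.of_forall fun t => ?_
      show φ 0 ≤ φ t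
      rw [hφdef]
      simp only
      have e : x₀ + (0:ℝ) • d = x₀ := by simp
      rw [e]
      exact hglobal _
    have hφeq : ∀ t : ℝ, φ t =
        ∑ i ∈ Finset.Icc (1 : ℤ) ((N : ℤ) + 2),
          p i / 2 * (fd2 y (i - 2) + t * fd2 (emb N d) (i - 2)) ^ 2
        - ∑ i ∈ Finset.Icc (1 : ℤ) ((N : ℤ) + 1),
          q i / 2 * (fd y (i - 1) + t * fd (emb N d) (i - 1)) ^ 2
        + ∑ i ∈ Finset.Icc (1 : ℤ) (N : ℤ), Fint f i (y i + t * emb N d i) := by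
      intro t
      rw [hφdef, hgdef]
      simp only
      unfold _root_.J
      have he : emb N (x₀ + t • d) = fun m => y m + t * emb N d m :=
        funext fun m => emb_add_smul x₀ d t m
      rw [he]
      congr 1
      · congr 1
        · refine Finset.sum_congr rfl fun i _ => ?_
          rw [fd2_lin]
        · refine Finset.sum_congr rfl fun i _ => ?_
          rw [fd_lin]
    set D : ℝ := ∑ i ∈ Finset.Icc (1 : ℤ) ((N : ℤ) + 2),
          p i * fd2 y (i - 2) * fd2 (emb N d) (i - 2)
        - ∑ i ∈ Finset.Icc (1 : ℤ) ((N : ℤ) + 1),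
          q i * fd y (i - 1) * fd (emb N d) (i - 1)
        + ∑ i ∈ Finset.Icc (1 : ℤ) (N : ℤ), f i (y i) * emb N d i with hDdef
    have hD : HasDerivAt φ D 0 := by
      rw [show φ = fun t : ℝ =>
          ∑ i ∈ Finset.Icc (1 : ℤ) ((N : ℤ) + 2),
            p i / 2 * (fd2 y (i - 2) + t * fd2 (emb N d) (i - 2)) ^ 2
          - ∑ i ∈ Finset.Icc (1 : ℤ) ((N : ℤ) + 1),
            q i / 2 * (fd y (i - 1) + t * fd (emb N d) (i - 1)) ^ 2
          + ∑ i ∈ Finset.Icc (1 : ℤ) (N : ℤ), Fint f i (y i + t * emb N d i)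
        from funext hφeq]
      rw [hDdef]
      refine HasDerivAt.add (HasDerivAt.sub ?_ ?_) ?_
      · refine HasDerivAt.fun_sum fun i _ => ?_
        have hb : HasDerivAt (fun t : ℝ => fd2 y (i - 2) + t * fd2 (emb N d) (i - 2))
            (fd2 (emb N d) (i - 2)) 0 := by
          simpa using ((hasDerivAt_id (0:ℝ)).mul_const (fd2 (emb N d) (i - 2))).const_add
            (fd2 y (i - 2))
        have := (hb.pow 2).const_mul (p i / 2)
        refine this.congr_deriv ?_
        simp
        ring
      · refine HasDerivAt.fun_sum fun i _ => ?_
        have hb : HasDerivAt (fun t : ℝ => fd y (i - 1) + t * fd (emb N d) (i - 1))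
            (fd (emb N d) (i - 1)) 0 := by
          simpa using ((hasDerivAt_id (0:ℝ)).mul_const (fd (emb N d) (i - 1))).const_add
            (fd y (i - 1))
        have := (hb.pow 2).const_mul (q i / 2)
        refine this.congr_deriv ?_
        simp
        ring
      · refine HasDerivAt.fun_sum fun i hi => ?_
        have hin : HasDerivAt (fun t : ℝ => y i + t * emb N d i) (emb N d i) 0 := by
          simpa using ((hasDerivAt_id (0:ℝ)).mul_const (emb N d i)).const_add (y i)
        have hout : HasDerivAt (Fint f i) (f i (y i + 0 * emb N d i)) (y i + 0 * emb N d i) :=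
          Fint_hasDerivAt (hf i hi) _
        have hcomp := HasDerivAt.comp (0:ℝ) hout hin
        refine hcomp.congr_deriv ?_
        simp
    have hD0 : D = 0 := by
      have h1 := hloc.deriv_eq_zero
      rw [hD.deriv] at h1
      exact h1
    -- collapse the sums in D
    have hs1 : ∑ i ∈ Finset.Icc (1 : ℤ) ((N : ℤ) + 2),
        p i * fd2 y (i - 2) * fd2 (emb N d) (i - 2)
        = p k * fd2 y (k - 2) - 2 * (p (k + 1) * fd2 y (k + 1 - 2))
          + p (k + 2) * fd2 y (k + 2 - 2) := by
      have hterm : ∀ i : ℤ, p i * fd2 y (i - 2) * fd2 (emb N d) (i - 2)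
          = (if i = k then p i * fd2 y (i - 2) else 0)
            + (if i = k + 1 then -2 * (p i * fd2 y (i - 2)) else 0)
            + (if i = k + 2 then p i * fd2 y (i - 2) else 0) := by
        intro i
        rw [fd2_eval (emb N d) i, hindB i, hindB (i - 1), hindB (i - 2)]
        have c2 : (i - 1 = k) = (i = k + 1) := propext (by omega)
        have c3 : (i - 2 = k) = (i = k + 2) := propext (by omega)
        simp only [c2, c3]
        split_ifs <;> first | ring | (exfalso; omega)
      rw [Finset.sum_congr rfl fun i _ => hterm i, Finset.sum_add_distrib,
        Finset.sum_add_distrib, Finset.sum_ite_eq', Finset.sum_ite_eq', Finset.sum_ite_eq',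
        if_pos (show k ∈ Finset.Icc (1:ℤ) ((N:ℤ)+2) by rw [Finset.mem_Icc]; omega),
        if_pos (show k + 1 ∈ Finset.Icc (1:ℤ) ((N:ℤ)+2) by rw [Finset.mem_Icc]; omega),
        if_pos (show k + 2 ∈ Finset.Icc (1:ℤ) ((N:ℤ)+2) by rw [Finset.mem_Icc]; omega)]
      ring
    have hs2 : ∑ i ∈ Finset.Icc (1 : ℤ) ((N : ℤ) + 1),
        q i * fd y (i - 1) * fd (emb N d) (i - 1)
        = q k * fd y (k - 1) - q (k + 1) * fd y (k + 1 - 1) := by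
      have hterm : ∀ i : ℤ, q i * fd y (i - 1) * fd (emb N d) (i - 1)
          = (if i = k then q i * fd y (i - 1) else 0)
            + (if i = k + 1 then -(q i * fd y (i - 1)) else 0) := by
        intro i
        rw [fd_eval (emb N d) i, hindB i, hindB (i - 1)]
        have c2 : (i - 1 = k) = (i = k + 1) := propext (by omega)
        simp only [c2]
        split_ifs <;> first | ring | (exfalso; omega)
      rw [Finset.sum_congr rfl fun i _ => hterm i, Finset.sum_add_distrib,
        Finset.sum_ite_eq', Finset.sum_ite_eq',
        if_pos (show k ∈ Finset.Icc (1:ℤ) ((N:ℤ)+1) by rw [Finset.mem_Icc]; omega),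
        if_pos (show k + 1 ∈ Finset.Icc (1:ℤ) ((N:ℤ)+1) by rw [Finset.mem_Icc]; omega)]
      ring
    have hs3 : ∑ i ∈ Finset.Icc (1 : ℤ) (N : ℤ), f i (y i) * emb N d i = f k (y k) := by
      have hterm : ∀ i : ℤ, f i (y i) * emb N d i = if i = k then f i (y i) else 0 := by
        intro i
        rw [hindB i, mul_ite, mul_one, mul_zero]
      rw [Finset.sum_congr rfl fun i _ => hterm i, Finset.sum_ite_eq', if_pos hkmem]
    have e1 : fd2 (fun j' => p j' * fd2 y (j' - 2)) k
        = p (k + 2) * fd2 y (k + 2 - 2) - 2 * (p (k + 1) * fd2 y (k + 1 - 2))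
          + p k * fd2 y (k - 2) := by
      simp only [fd2]
      try ring
    have e2 : fd (fun j' => q j' * fd y (j' - 1)) k
        = q (k + 1) * fd y (k + 1 - 1) - q k * fd y (k - 1) := by
      simp only [fd]
      try ring
    have hfinal := hD0
    rw [hDdef, hs1, hs2, hs3] at hfinal
    rw [e1, e2]
    linarith [hfinal]
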